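/- Let n ≥ 2 and N = n(n−1)/2. Let (A_k)_{k≥0} be a sequence of n×n real symmetric matrices such that for every k there exist indices 1 ≤ i_k < j_k ≤ n and a Jacobi rotation J_k = J(i_k,j_k;c_k,s_k) with A_{k+1} = J_kᵀ A_k J_k, (A_{k+1})_{i_k j_k} = 0, and |(A_k)_{i_k j_k}| = max_{p≠q} |(A_k)_{pq}|. Then for all k ≥ 0, ‖off(A_k)‖_F² ≤ (1 − 1/N)^k ‖off(A_0)‖_F². -/

import Mathlib

open Matrix

noncomputable def specNorm {m n : ℕ} (A : Matrix (Fin m) (Fin n) ℝ) : ℝ :=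
  ‖LinearMap.toContinuousLinearMap (Matrix.toEuclideanLin A)‖

noncomputable def frobNorm {m n : ℕ} (A : Matrix (Fin m) (Fin n) ℝ) : ℝ :=
  Real.sqrt (∑ p, ∑ q, (A p q) ^ 2)

def offDiag {n : ℕ} (A : Matrix (Fin n) (Fin n) ℝ) : Matrix (Fin n) (Fin n) ℝ :=
  fun p q => if p = q then 0 else A p q

def jacobiRot {n : ℕ} (i j : Fin n) (c s : ℝ) : Matrix (Fin n) (Fin n) ℝ :=
  fun p q =>
    if p = i ∧ q = i then c
    else if p = j ∧ q = j then c
    else if p = i ∧ q = j then s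
    else if p = j ∧ q = i then -s
    else if p = q then 1 else 0

open Classical in
noncomputable def eigValsDesc {n : ℕ} (A : Matrix (Fin n) (Fin n) ℝ) : Fin n → ℝ :=
  if hA : A.IsHermitian then
    fun k => (hA.eigenvalues ∘ Tuple.sort hA.eigenvalues) k.rev
  else 0

noncomputable def singValsDesc {m n : ℕ} (A : Matrix (Fin m) (Fin n) ℝ) : Fin n → ℝ :=
  fun k => Real.sqrt (eigValsDesc (Aᵀ * A) k)

section JacobiAux

variable {n : ℕ}

private lemma sum_eq_pair (i j : Fin n) (hij : i ≠ j) (f : Fin n → ℝ)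
    (h : ∀ q, q ≠ i → q ≠ j → f q = 0) : ∑ q, f q = f i + f j := by
  have hf : ∀ q, f q = (if q = i then f i else 0) + (if q = j then f j else 0) := by
    intro q
    by_cases hqi : q = i
    · subst hqi; simp [hij]
    · by_cases hqj : q = j
      · subst hqj; simp [hqi]
      · simp [hqi, hqj, h q hqi hqj]
  rw [Finset.sum_congr rfl fun q _ => hf q, Finset.sum_add_distrib]
  simp

private lemma mul_jacobiRot_apply (i j : Fin n) (hij : i ≠ j) (c s : ℝ)
    (M : Matrix (Fin n) (Fin n) ℝ) (r q : Fin n) :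
    (M * jacobiRot i j c s) r q =
      if q = i then c * M r i - s * M r j
      else if q = j then s * M r i + c * M r j
      else M r q := by
  rw [Matrix.mul_apply]
  by_cases hqi : q = i
  · rw [if_pos hqi, hqi]
    have hf : ∀ t : Fin n, M r t * jacobiRot i j c s t i =
        (if t = i then c * M r i else 0) + (if t = j then (-s) * M r j else 0) := by
      intro t
      by_cases hti : t = i
      · simp [jacobiRot, hti, hij]
        all_goals ring
      · by_cases htj : t = j
        · simp [jacobiRot, htj, hij, Ne.symm hij, hti]
          all_goals ring
        · simp [jacobiRot, hti, htj]
    rw [Finset.sum_congr rfl fun t _ => hf t, Finset.sum_add_distrib]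
    simp [Finset.sum_ite_eq']
    all_goals ring
  · by_cases hqj : q = j
    · rw [if_neg hqi, if_pos hqj, hqj]
      have hf : ∀ t : Fin n, M r t * jacobiRot i j c s t j =
          (if t = i then s * M r i else 0) + (if t = j then c * M r j else 0) := by
        intro t
        by_cases hti : t = i
        · simp [jacobiRot, hti, hij, Ne.symm hij]
          all_goals ring
        · by_cases htj : t = j
          · simp [jacobiRot, htj, hij, Ne.symm hij, hti]
            all_goals ring
          · simp [jacobiRot, hti, htj]
      rw [Finset.sum_congr rfl fun t _ => hf t, Finset.sum_add_distrib]
      simp [Finset.sum_ite_eq']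
      all_goals ring
    · rw [if_neg hqi, if_neg hqj]
      have hf : ∀ t : Fin n, M r t * jacobiRot i j c s t q =
          (if t = q then M r q else 0) := by
        intro t
        by_cases htq : t = q
        · simp [jacobiRot, htq, hqi, hqj]
        · simp [jacobiRot, hqi, hqj, htq]
      rw [Finset.sum_congr rfl fun t _ => hf t]
      simp [Finset.sum_ite_eq']

private lemma jacobiRotT_mul_apply (i j : Fin n) (hij : i ≠ j) (c s : ℝ)
    (M : Matrix (Fin n) (Fin n) ℝ) (p q : Fin n) :
    ((jacobiRot i j c s)ᵀ * M) p q =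
      if p = i then c * M i q - s * M j q
      else if p = j then s * M i q + c * M j q
      else M p q := by
  rw [Matrix.mul_apply]
  simp_rw [Matrix.transpose_apply]
  by_cases hpi : p = i
  · rw [if_pos hpi, hpi]
    have hf : ∀ t : Fin n, jacobiRot i j c s t i * M t q =
        (if t = i then c * M i q else 0) + (if t = j then (-s) * M j q else 0) := by
      intro t
      by_cases hti : t = i
      · simp [jacobiRot, hti, hij]
        all_goals ring
      · by_cases htj : t = j
        · simp [jacobiRot, htj, hij, Ne.symm hij, hti]
          all_goals ring
        · simp [jacobiRot, hti, htj]
    rw [Finset.sum_congr rfl fun t _ => hf t, Finset.sum_add_distrib]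
    simp [Finset.sum_ite_eq']
    all_goals ring
  · by_cases hpj : p = j
    · rw [if_neg hpi, if_pos hpj, hpj]
      have hf : ∀ t : Fin n, jacobiRot i j c s t j * M t q =
          (if t = i then s * M i q else 0) + (if t = j then c * M j q else 0) := by
        intro t
        by_cases hti : t = i
        · simp [jacobiRot, hti, hij, Ne.symm hij]
          all_goals ring
        · by_cases htj : t = j
          · simp [jacobiRot, htj, hij, Ne.symm hij, hti]
            all_goals ring
          · simp [jacobiRot, hti, htj]
      rw [Finset.sum_congr rfl fun t _ => hf t, Finset.sum_add_distrib]
      simp [Finset.sum_ite_eq']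
      all_goals ring
    · rw [if_neg hpi, if_neg hpj]
      have hf : ∀ t : Fin n, jacobiRot i j c s t p * M t q =
          (if t = p then M p q else 0) := by
        intro t
        by_cases htp : t = p
        · simp [jacobiRot, htp, hpi, hpj]
        · simp [jacobiRot, hpi, hpj, htp]
      rw [Finset.sum_congr rfl fun t _ => hf t]
      simp [Finset.sum_ite_eq']

private lemma row_sq_sum (i j : Fin n) (hij : i ≠ j) (c s : ℝ) (hcs : c ^ 2 + s ^ 2 = 1)
    (M : Matrix (Fin n) (Fin n) ℝ) (r : Fin n) :
    ∑ q, ((M * jacobiRot i j c s) r q) ^ 2 = ∑ q, (M r q) ^ 2 := by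
  have e : ∑ q, (((M * jacobiRot i j c s) r q) ^ 2 - (M r q) ^ 2)
      = (((M * jacobiRot i j c s) r i) ^ 2 - (M r i) ^ 2)
        + (((M * jacobiRot i j c s) r j) ^ 2 - (M r j) ^ 2) :=
    sum_eq_pair i j hij _ (fun q hqi hqj => by
      rw [mul_jacobiRot_apply i j hij, if_neg hqi, if_neg hqj]; ring)
  rw [Finset.sum_sub_distrib] at e
  have hi : (M * jacobiRot i j c s) r i = c * M r i - s * M r j := by
    rw [mul_jacobiRot_apply i j hij, if_pos rfl]
  have hj : (M * jacobiRot i j c s) r j = s * M r i + c * M r j := by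
    rw [mul_jacobiRot_apply i j hij, if_neg (Ne.symm hij), if_pos rfl]
  rw [hi, hj] at e
  linear_combination e + (M r i ^ 2 + M r j ^ 2) * hcs

private lemma col_sq_sum (i j : Fin n) (hij : i ≠ j) (c s : ℝ) (hcs : c ^ 2 + s ^ 2 = 1)
    (M : Matrix (Fin n) (Fin n) ℝ) (q : Fin n) :
    ∑ p, (((jacobiRot i j c s)ᵀ * M) p q) ^ 2 = ∑ p, (M p q) ^ 2 := by
  have e : ∑ p, ((((jacobiRot i j c s)ᵀ * M) p q) ^ 2 - (M p q) ^ 2)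
      = ((((jacobiRot i j c s)ᵀ * M) i q) ^ 2 - (M i q) ^ 2)
        + ((((jacobiRot i j c s)ᵀ * M) j q) ^ 2 - (M j q) ^ 2) :=
    sum_eq_pair i j hij _ (fun p hpi hpj => by
      rw [jacobiRotT_mul_apply i j hij, if_neg hpi, if_neg hpj]; ring)
  rw [Finset.sum_sub_distrib] at e
  have hi : ((jacobiRot i j c s)ᵀ * M) i q = c * M i q - s * M j q := by
    rw [jacobiRotT_mul_apply i j hij, if_pos rfl]
  have hj : ((jacobiRot i j c s)ᵀ * M) j q = s * M i q + c * M j q := by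
    rw [jacobiRotT_mul_apply i j hij, if_neg (Ne.symm hij), if_pos rfl]
  rw [hi, hj] at e
  linear_combination e + (M i q ^ 2 + M j q ^ 2) * hcs

private lemma frob_sq_invariant (i j : Fin n) (hij : i ≠ j) (c s : ℝ)
    (hcs : c ^ 2 + s ^ 2 = 1) (M : Matrix (Fin n) (Fin n) ℝ) :
    ∑ p, ∑ q, ((((jacobiRot i j c s)ᵀ * M) * jacobiRot i j c s) p q) ^ 2
      = ∑ p, ∑ q, (M p q) ^ 2 := by
  calc ∑ p, ∑ q, ((((jacobiRot i j c s)ᵀ * M) * jacobiRot i j c s) p q) ^ 2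
      = ∑ p, ∑ q, (((jacobiRot i j c s)ᵀ * M) p q) ^ 2 :=
        Finset.sum_congr rfl fun p _ => row_sq_sum i j hij c s hcs _ p
    _ = ∑ q, ∑ p, (((jacobiRot i j c s)ᵀ * M) p q) ^ 2 := Finset.sum_comm
    _ = ∑ q, ∑ p, (M p q) ^ 2 :=
        Finset.sum_congr rfl fun q _ => col_sq_sum i j hij c s hcs M q
    _ = ∑ p, ∑ q, (M p q) ^ 2 := Finset.sum_comm

private lemma jacobi_diag_alg (c s x y z bii bjj : ℝ) (hcs : c ^ 2 + s ^ 2 = 1)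
    (hbii : bii = c * (c * x - s * z) - s * (c * z - s * y))
    (hbjj : bjj = s * (s * x + c * z) + c * (s * z + c * y))
    (h0 : s * (c * x - s * z) + c * (c * z - s * y) = 0) :
    bii ^ 2 + bjj ^ 2 = x ^ 2 + y ^ 2 + 2 * z ^ 2 := by
  subst hbii hbjj
  linear_combination (-2 * c * s * x + 2 * c * s * y - 2 * c ^ 2 * z + 2 * s ^ 2 * z) * h0 +
    (2 * z ^ 2 + 2 * c ^ 2 * z ^ 2 + 2 * s ^ 2 * z ^ 2 + x ^ 2 + y ^ 2 + c ^ 2 * x ^ 2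
      + s ^ 2 * x ^ 2 + c ^ 2 * y ^ 2 + s ^ 2 * y ^ 2) * hcs

private lemma frob_off_sq (M : Matrix (Fin n) (Fin n) ℝ) :
    frobNorm (offDiag M) ^ 2 = ∑ p, ∑ q, (if p = q then (0 : ℝ) else (M p q) ^ 2) := by
  unfold frobNorm
  rw [Real.sq_sqrt (by positivity)]
  refine Finset.sum_congr rfl fun p _ => Finset.sum_congr rfl fun q _ => ?_
  unfold offDiag
  by_cases h : p = q <;> simp [h]

private lemma off_sum_split (M : Matrix (Fin n) (Fin n) ℝ) :
    (∑ p, ∑ q, (if p = q then (0 : ℝ) else (M p q) ^ 2))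
      = (∑ p, ∑ q, (M p q) ^ 2) - ∑ p, (M p p) ^ 2 := by
  have hrow : ∀ p : Fin n, (∑ q, (if p = q then (0 : ℝ) else (M p q) ^ 2))
      = (∑ q, (M p q) ^ 2) - (M p p) ^ 2 := by
    intro p
    have h1 : ∀ q : Fin n, (if p = q then (0 : ℝ) else (M p q) ^ 2)
        = (M p q) ^ 2 - (if p = q then (M p q) ^ 2 else 0) := by
      intro q; by_cases h : p = q <;> simp [h]
    rw [Finset.sum_congr rfl fun q _ => h1 q, Finset.sum_sub_distrib, Finset.sum_ite_eq]
    simp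
  rw [Finset.sum_congr rfl fun p _ => hrow p, Finset.sum_sub_distrib]

end JacobiAux

/-- Linear convergence of the classical Jacobi method. -/
theorem classical_jacobi_linear_convergence {n : ℕ} (hn : 2 ≤ n)
    (N : ℕ) (hN : N = n * (n - 1) / 2)
    (A : ℕ → Matrix (Fin n) (Fin n) ℝ)
    (hsymm : ∀ k, (A k)ᵀ = A k)
    (i j : ℕ → Fin n) (c s : ℕ → ℝ)
    (hij : ∀ k, i k < j k)
    (hcs : ∀ k, c k ^ 2 + s k ^ 2 = 1)
    (hrec : ∀ k, A (k + 1) =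
      (jacobiRot (i k) (j k) (c k) (s k))ᵀ * A k * jacobiRot (i k) (j k) (c k) (s k))
    (hzero : ∀ k, A (k + 1) (i k) (j k) = 0)
    (hmax : ∀ k, ∀ p q : Fin n, p ≠ q → |A k p q| ≤ |A k (i k) (j k)|) :
    ∀ k, frobNorm (offDiag (A k)) ^ 2 ≤
      (1 - 1 / (N : ℝ)) ^ k * frobNorm (offDiag (A 0)) ^ 2 := by
  -- basic facts about N
  have he : Even ((n - 1) * n) := by
    have h := Nat.even_mul_succ_self (n - 1)
    have h1 : n - 1 + 1 = n := by omega
    rwa [h1] at h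
  have hm : 2 ∣ n * (n - 1) := by rw [mul_comm]; exact he.two_dvd
  have h2 : 2 ≤ n * (n - 1) := by
    have := Nat.mul_le_mul hn (show 1 ≤ n - 1 by omega)
    simpa using this
  have h2N : 2 * N = n * (n - 1) := by omega
  have hNpos : 0 < N := by omega
  have hNR : (0 : ℝ) < (N : ℝ) := by exact_mod_cast hNpos
  have hcast : ((2 * N : ℕ) : ℝ) = (n : ℝ) * ((n : ℝ) - 1) := by
    rw [h2N]
    push_cast [Nat.cast_sub (show 1 ≤ n by omega)]
    ring
  -- the one-step inequality
  have step : ∀ k, frobNorm (offDiag (A (k + 1))) ^ 2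
      ≤ (1 - 1 / (N : ℝ)) * frobNorm (offDiag (A k)) ^ 2 := by
    intro k
    have hne : i k ≠ j k := ne_of_lt (hij k)
    have hsym : A k (j k) (i k) = A k (i k) (j k) := by
      have h := congrFun (congrFun (hsymm k).symm (j k)) (i k)
      rwa [Matrix.transpose_apply] at h
    -- entries of A (k+1)
    have hTi : ∀ q, ((jacobiRot (i k) (j k) (c k) (s k))ᵀ * A k) (i k) q
        = c k * A k (i k) q - s k * A k (j k) q := fun q => by
      rw [jacobiRotT_mul_apply (i k) (j k) hne, if_pos rfl]
    have hTj : ∀ q, ((jacobiRot (i k) (j k) (c k) (s k))ᵀ * A k) (j k) q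
        = s k * A k (i k) q + c k * A k (j k) q := fun q => by
      rw [jacobiRotT_mul_apply (i k) (j k) hne, if_neg (Ne.symm hne), if_pos rfl]
    have hTo : ∀ p q, p ≠ i k → p ≠ j k →
        ((jacobiRot (i k) (j k) (c k) (s k))ᵀ * A k) p q = A k p q := fun p q hpi hpj => by
      rw [jacobiRotT_mul_apply (i k) (j k) hne, if_neg hpi, if_neg hpj]
    have hbii : A (k + 1) (i k) (i k)
        = c k * (c k * A k (i k) (i k) - s k * A k (i k) (j k))
          - s k * (c k * A k (i k) (j k) - s k * A k (j k) (j k)) := by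
      rw [hrec k, mul_jacobiRot_apply (i k) (j k) hne, if_pos rfl]
      simp only [hTi]
      rw [hsym]
    have hbjj : A (k + 1) (j k) (j k)
        = s k * (s k * A k (i k) (i k) + c k * A k (i k) (j k))
          + c k * (s k * A k (i k) (j k) + c k * A k (j k) (j k)) := by
      rw [hrec k, mul_jacobiRot_apply (i k) (j k) hne, if_neg (Ne.symm hne), if_pos rfl]
      simp only [hTj]
      rw [hsym]
    have hbij : A (k + 1) (i k) (j k)
        = s k * (c k * A k (i k) (i k) - s k * A k (i k) (j k))
          + c k * (c k * A k (i k) (j k) - s k * A k (j k) (j k)) := by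
      rw [hrec k, mul_jacobiRot_apply (i k) (j k) hne, if_neg (Ne.symm hne), if_pos rfl]
      simp only [hTi]
      rw [hsym]
    have h0 := hbij.symm.trans (hzero k)
    have hboff : ∀ p, p ≠ i k → p ≠ j k → A (k + 1) p p = A k p p := by
      intro p hpi hpj
      rw [hrec k, mul_jacobiRot_apply (i k) (j k) hne, if_neg hpi, if_neg hpj,
        hTo p p hpi hpj]
    -- diagonal sum identity
    have hdiag : ∑ p, (A (k + 1) p p) ^ 2
        = (∑ p, (A k p p) ^ 2) + 2 * (A k (i k) (j k)) ^ 2 := by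
      have e : ∑ p, ((A (k + 1) p p) ^ 2 - (A k p p) ^ 2)
          = ((A (k + 1) (i k) (i k)) ^ 2 - (A k (i k) (i k)) ^ 2)
            + ((A (k + 1) (j k) (j k)) ^ 2 - (A k (j k) (j k)) ^ 2) :=
        sum_eq_pair (i k) (j k) hne _ (fun p hpi hpj => by rw [hboff p hpi hpj]; ring)
      rw [Finset.sum_sub_distrib] at e
      have halg := jacobi_diag_alg (c k) (s k) (A k (i k) (i k)) (A k (j k) (j k))
        (A k (i k) (j k)) _ _ (hcs k) hbii hbjj h0
      linarith
    -- total sum invariance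
    have htot : ∑ p, ∑ q, (A (k + 1) p q) ^ 2 = ∑ p, ∑ q, (A k p q) ^ 2 := by
      rw [hrec k]
      exact frob_sq_invariant (i k) (j k) hne (c k) (s k) (hcs k) (A k)
    -- off-diagonal bound
    have hbound : (∑ p, ∑ q, (if p = q then (0 : ℝ) else (A k p q) ^ 2))
        ≤ ((2 * N : ℕ) : ℝ) * (A k (i k) (j k)) ^ 2 := by
      have h1 : ∀ p q : Fin n, (if p = q then (0 : ℝ) else (A k p q) ^ 2)
          ≤ (if p = q then (0 : ℝ) else (A k (i k) (j k)) ^ 2) := by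
        intro p q
        by_cases h : p = q
        · simp [h]
        · simp only [if_neg h]
          calc (A k p q) ^ 2 = |A k p q| ^ 2 := (sq_abs _).symm
            _ ≤ |A k (i k) (j k)| ^ 2 := by
                have := hmax k p q h
                exact pow_le_pow_left₀ (abs_nonneg _) this 2
            _ = (A k (i k) (j k)) ^ 2 := sq_abs _
      have h2' : (∑ p, ∑ q, (if p = q then (0 : ℝ) else (A k p q) ^ 2))
          ≤ ∑ p : Fin n, ∑ q : Fin n, (if p = q then (0 : ℝ) else (A k (i k) (j k)) ^ 2) :=
        Finset.sum_le_sum fun p _ => Finset.sum_le_sum fun q _ => h1 p q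
      have h3 : (∑ p : Fin n, ∑ q : Fin n, (if p = q then (0 : ℝ) else (A k (i k) (j k)) ^ 2))
          = (n : ℝ) * (((n : ℝ) - 1) * (A k (i k) (j k)) ^ 2) := by
        have hrow : ∀ p : Fin n, (∑ q : Fin n, (if p = q then (0 : ℝ)
            else (A k (i k) (j k)) ^ 2)) = ((n : ℝ) - 1) * (A k (i k) (j k)) ^ 2 := by
          intro p
          have h4 : ∀ q : Fin n, (if p = q then (0 : ℝ) else (A k (i k) (j k)) ^ 2)
              = (A k (i k) (j k)) ^ 2 - (if p = q then (A k (i k) (j k)) ^ 2 else 0) := by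
            intro q; by_cases h : p = q <;> simp [h]
          rw [Finset.sum_congr rfl fun q _ => h4 q, Finset.sum_sub_distrib,
            Finset.sum_ite_eq, Finset.sum_const]
          simp [Finset.card_univ]
          ring
        rw [Finset.sum_congr rfl fun p _ => hrow p, Finset.sum_const]
        simp [Finset.card_univ]
      calc (∑ p, ∑ q, (if p = q then (0 : ℝ) else (A k p q) ^ 2))
          ≤ (n : ℝ) * (((n : ℝ) - 1) * (A k (i k) (j k)) ^ 2) := h3 ▸ h2'
        _ = ((2 * N : ℕ) : ℝ) * (A k (i k) (j k)) ^ 2 := by rw [hcast]; ring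
    -- assemble
    rw [frob_off_sq, frob_off_sq, off_sum_split, off_sum_split]
    rw [off_sum_split] at hbound
    have hXnn : (0 : ℝ) ≤ (∑ p, ∑ q, (A k p q) ^ 2) - ∑ p, (A k p p) ^ 2 := by
      rw [← off_sum_split]
      exact Finset.sum_nonneg fun p _ => Finset.sum_nonneg fun q _ => by positivity
    have hdiv : ((∑ p, ∑ q, (A k p q) ^ 2) - ∑ p, (A k p p) ^ 2) / (N : ℝ)
        ≤ 2 * (A k (i k) (j k)) ^ 2 := by
      rw [div_le_iff₀ hNR]
      have : ((2 * N : ℕ) : ℝ) = 2 * (N : ℝ) := by push_cast; ring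
      rw [this] at hbound
      nlinarith [hbound]
    have hexp : (1 - 1 / (N : ℝ)) * ((∑ p, ∑ q, (A k p q) ^ 2) - ∑ p, (A k p p) ^ 2)
        = ((∑ p, ∑ q, (A k p q) ^ 2) - ∑ p, (A k p p) ^ 2)
          - ((∑ p, ∑ q, (A k p q) ^ 2) - ∑ p, (A k p p) ^ 2) / (N : ℝ) := by
      field_simp
    rw [hexp, htot, hdiag]
    linarith
  -- induction
  have hfac : (0 : ℝ) ≤ 1 - 1 / (N : ℝ) := by
    have hN1 : (1 : ℝ) ≤ (N : ℝ) := by exact_mod_cast hNpos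
    have : 1 / (N : ℝ) ≤ 1 := by rw [div_le_one hNR]; linarith
    linarith
  intro k
  induction k with
  | zero => simp
  | succ k ih =>
    calc frobNorm (offDiag (A (k + 1))) ^ 2
        ≤ (1 - 1 / (N : ℝ)) * frobNorm (offDiag (A k)) ^ 2 := step k
      _ ≤ (1 - 1 / (N : ℝ)) * ((1 - 1 / (N : ℝ)) ^ k * frobNorm (offDiag (A 0)) ^ 2) :=
          mul_le_mul_of_nonneg_left ih hfac
      _ = (1 - 1 / (N : ℝ)) ^ (k + 1) * frobNorm (offDiag (A 0)) ^ 2 := by ring
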